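/- (Characterization of the limit candidate) Under the setting of the key lower bound (shift-invariant family of [0,1]-valued Borel cost functions h_u, u ∈ 𝒰, and V_ν = inf_u ∫ h_u dν), if (θ^k) is a sequence of probability measures on [0,∞) satisfying the long-term condition, then sup over all probability measures μ on [0,∞) of inf_{t≥0} V_{T_t♯μ} equals sup_{k≥1} inf_{t≥0} V_{T_t♯θ^k}. -/

import Mathlib

open MeasureTheory Set Filter

/-- The `s`-total variation of a Borel measure `θ` on `[0,∞)`:
`TV_s(θ) = sup_{Q Borel ⊆ [0,∞)} |θ(Q) - θ(Q+s)|`. -/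
noncomputable def TV (θ : Measure ℝ) (s : ℝ) : ℝ :=
  ⨆ Q : {Q : Set ℝ // MeasurableSet Q ∧ Q ⊆ Ici 0},
    |(θ Q.1).toReal - (θ ((fun x => x + s) '' Q.1)).toReal|

/-- The long-term condition for a sequence of measures on `[0,∞)`. -/
def LTC (θ : ℕ → Measure ℝ) : Prop :=
  ∀ S > (0:ℝ), Tendsto (fun k => ⨆ s : Icc (0:ℝ) S, TV (θ k) s) atTop (nhds 0)

section Aux

private lemma integrable_of_bdd {f : ℝ → ℝ} (hf : Measurable f) (h0 : ∀ x, 0 ≤ f x)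
    (h1 : ∀ x, f x ≤ 1) (ν : Measure ℝ) [IsFiniteMeasure ν] : Integrable f ν :=
  Integrable.mono' (integrable_const 1) hf.aestronglyMeasurable
    (Eventually.of_forall fun x => by
      rw [Real.norm_eq_abs, abs_of_nonneg (h0 x)]; exact h1 x)

private lemma isFiniteRestrictIoc (a b : ℝ) :
    IsFiniteMeasure (volume.restrict (Ioc a b)) :=
  ⟨by
    rw [Measure.restrict_apply_univ, Real.volume_Ioc]
    exact ENNReal.ofReal_lt_top⟩

private lemma integrableOn_Ioc_of_bdd {f : ℝ → ℝ} (hf : Measurable f) (h0 : ∀ x, 0 ≤ f x)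
    (h1 : ∀ x, f x ≤ 1) (a b : ℝ) : IntegrableOn f (Ioc a b) volume := by
  haveI := isFiniteRestrictIoc a b
  exact integrable_of_bdd hf h0 h1 _

private lemma intervalIntegrable_of_bdd {f : ℝ → ℝ} (hf : Measurable f) (h0 : ∀ x, 0 ≤ f x)
    (h1 : ∀ x, f x ≤ 1) (a b : ℝ) : IntervalIntegrable f volume a b :=
  ⟨integrableOn_Ioc_of_bdd hf h0 h1 a b, integrableOn_Ioc_of_bdd hf h0 h1 b a⟩

private lemma TV_nonneg (θ : Measure ℝ) (s : ℝ) : 0 ≤ TV θ s :=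
  Real.iSup_nonneg fun _ => abs_nonneg _

private lemma TV_term_le (θ : Measure ℝ) [IsProbabilityMeasure θ] (s : ℝ)
    (Q : {Q : Set ℝ // MeasurableSet Q ∧ Q ⊆ Ici 0}) :
    |(θ Q.1).toReal - (θ ((fun x => x + s) '' Q.1)).toReal| ≤ 1 := by
  have hQ : (θ Q.1).toReal ≤ 1 := by
    simpa using ENNReal.toReal_mono (measure_ne_top θ univ) (measure_mono (subset_univ Q.1))
  have hQ' : (θ ((fun x => x + s) '' Q.1)).toReal ≤ 1 := by
    simpa using ENNReal.toReal_mono (measure_ne_top θ univ) (measure_mono (subset_univ _))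
  rw [abs_sub_le_iff]
  constructor <;> nlinarith [ENNReal.toReal_nonneg (a := θ Q.1),
    ENNReal.toReal_nonneg (a := θ ((fun x => x + s) '' Q.1))]

private lemma TV_le_one (θ : Measure ℝ) [IsProbabilityMeasure θ] (s : ℝ) : TV θ s ≤ 1 :=
  Real.iSup_le (fun Q => TV_term_le θ s Q) zero_le_one

private lemma abs_le_TV (θ : Measure ℝ) [IsProbabilityMeasure θ] (s : ℝ) {Q : Set ℝ}
    (hQ : MeasurableSet Q) (hQ0 : Q ⊆ Ici 0) :
    |(θ Q).toReal - (θ ((fun x => x + s) '' Q)).toReal| ≤ TV θ s :=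
  le_ciSup (f := fun Q : {Q : Set ℝ // MeasurableSet Q ∧ Q ⊆ Ici 0} =>
    |(θ Q.1).toReal - (θ ((fun x => x + s) '' Q.1)).toReal|)
    ⟨1, by rintro _ ⟨R, rfl⟩; exact TV_term_le θ s R⟩ ⟨Q, hQ, hQ0⟩

/-- Set-level shift estimate from TV. -/
private lemma meas_preimage_le (ν : Measure ℝ) [IsProbabilityMeasure ν] (hν : ν (Iio 0) = 0)
    {s : ℝ} (hs : 0 ≤ s) {P : Set ℝ} (hP : MeasurableSet P) :
    (ν ((fun x => x + s) ⁻¹' P)).toReal ≤ (ν P).toReal + TV ν s := by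
  set R : Set ℝ := (fun x => x + s) ⁻¹' P ∩ Ici 0 with hR
  have hRmeas : MeasurableSet R := (hP.preimage (measurable_add_const s)).inter measurableSet_Ici
  have hRsub : R ⊆ Ici 0 := inter_subset_right
  have him : (fun x => x + s) '' R = P ∩ Ici s := by
    ext y
    constructor
    · rintro ⟨x, ⟨hxP, hx0⟩, rfl⟩
      exact ⟨hxP, by simpa using add_le_add_right (α := ℝ) hx0 s⟩
    · rintro ⟨hyP, hys⟩
      refine ⟨y - s, ⟨?_, by simpa [sub_nonneg] using hys⟩, by ring⟩
      show y - s + s ∈ P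
      simpa using hyP
  have h1 : ν ((fun x => x + s) ⁻¹' P) = ν R :=
    (measure_inter_conull' (measure_mono_null (fun x hx => by simpa [not_le] using hx.2) hν)).symm
  have h2 : |(ν R).toReal - (ν ((fun x => x + s) '' R)).toReal| ≤ TV ν s :=
    abs_le_TV ν s hRmeas hRsub
  have h3 : (ν ((fun x => x + s) '' R)).toReal ≤ (ν P).toReal := by
    rw [him]
    exact ENNReal.toReal_mono (measure_ne_top ν P) (measure_mono inter_subset_left)
  rw [h1]
  have := abs_sub_le_iff.mp h2
  linarith [this.1]

/-- Function-level shift estimate: `∫ f(x+s) dν ≤ ∫ f dν + TV ν s`. -/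
private lemma shift_integral_le (ν : Measure ℝ) [IsProbabilityMeasure ν] (hν : ν (Iio 0) = 0)
    {f : ℝ → ℝ} (hfm : Measurable f) (hf0 : ∀ x, 0 ≤ f x) (hf1 : ∀ x, f x ≤ 1)
    {s : ℝ} (hs : 0 ≤ s) :
    ∫ x, f (x + s) ∂ν ≤ (∫ x, f x ∂ν) + TV ν s := by
  have hfs : Measurable fun x => f (x + s) := hfm.comp (measurable_add_const s)
  have hint : Integrable f ν := integrable_of_bdd hfm hf0 hf1 ν
  have hints : Integrable (fun x => f (x + s)) ν :=
    integrable_of_bdd hfs (fun x => hf0 _) (fun x => hf1 _) ν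
  have l1 : ∫ x, f (x + s) ∂ν
      = ∫ t in Ioi (0:ℝ), (ν {a | t < f (a + s)}).toReal :=
    hints.integral_eq_integral_meas_lt (Eventually.of_forall fun x => hf0 _)
  have l2 : ∫ x, f x ∂ν = ∫ t in Ioi (0:ℝ), (ν {a | t < f a}).toReal :=
    hint.integral_eq_integral_meas_lt (Eventually.of_forall fun x => hf0 _)
  set g2 : ℝ → ℝ := fun t => (ν {a | t < f a}).toReal with hg2
  set c : ℝ := TV ν s with hc
  set ind : ℝ → ℝ := (Ioc (0:ℝ) 1).indicator (fun _ => c) with hind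
  have hanti : Antitone (fun t : ℝ => ν {a : ℝ | t < f a}) :=
    fun p q hpq => measure_mono fun a ha => lt_of_le_of_lt hpq ha
  have hg2m : Measurable g2 := hanti.measurable.ennreal_toReal
  have hindint : Integrable ind (volume.restrict (Ioi (0:ℝ))) := by
    refine Integrable.restrict ?_
    exact (IntegrableOn.integrable_indicator
      ((integrableOn_const_iff (C := c)).mpr (Or.inr (by simp))) measurableSet_Ioc)
  have hg2int : Integrable g2 (volume.restrict (Ioi (0:ℝ))) := by
    refine Integrable.mono' (g := fun t => (Ioc (0:ℝ) 1).indicator (fun _ => (1:ℝ)) t)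
      ?_ hg2m.aestronglyMeasurable ?_
    · exact Integrable.restrict ((IntegrableOn.integrable_indicator
        ((integrableOn_const_iff (C := (1:ℝ))).mpr (Or.inr (by simp))) measurableSet_Ioc))
    · refine (ae_restrict_iff' measurableSet_Ioi).mpr (Eventually.of_forall fun t ht => ?_)
      rw [Real.norm_eq_abs, abs_of_nonneg ENNReal.toReal_nonneg]
      show (ν {a : ℝ | t < f a}).toReal ≤ (Ioc (0:ℝ) 1).indicator (fun _ => (1:ℝ)) t
      by_cases ht1 : t ≤ 1
      · rw [Set.indicator_of_mem (show t ∈ Ioc (0:ℝ) 1 from ⟨ht, ht1⟩)]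
        simpa using ENNReal.toReal_mono (measure_ne_top ν univ)
          (measure_mono (subset_univ _))
      · have he : {a : ℝ | t < f a} = ∅ := by
          ext a; simp only [mem_setOf_eq, mem_empty_iff_false, iff_false, not_lt]
          exact (hf1 a).trans (le_of_not_ge ht1)
        rw [he, Set.indicator_of_notMem (fun hmem => ht1 hmem.2)]
        simp
  have hptwise : ∀ t ∈ Ioi (0:ℝ),
      (ν {a | t < f (a + s)}).toReal ≤ g2 t + ind t := by
    intro t ht
    by_cases ht1 : t ≤ 1
    · have : {a : ℝ | t < f (a + s)} = (fun x => x + s) ⁻¹' {y | t < f y} := rfl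
      rw [this, hind, Set.indicator_of_mem (show t ∈ Ioc (0:ℝ) 1 from ⟨ht, ht1⟩)]
      exact meas_preimage_le ν hν hs (measurableSet_lt measurable_const hfm)
    · have h0' : {a : ℝ | t < f (a + s)} = ∅ := by
        ext a; simp only [mem_setOf_eq, mem_empty_iff_false, iff_false, not_lt]
        exact (hf1 _).trans (le_of_not_ge ht1)
      have : (0:ℝ) ≤ g2 t + ind t := by
        refine add_nonneg ENNReal.toReal_nonneg ?_
        exact indicator_nonneg (fun _ _ => TV_nonneg ν s) t
      simpa [h0'] using this
  have hmono : ∫ t in Ioi (0:ℝ), (ν {a | t < f (a + s)}).toReal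
      ≤ ∫ t in Ioi (0:ℝ), (g2 t + ind t) := by
    refine integral_mono_of_nonneg (Eventually.of_forall fun t => ENNReal.toReal_nonneg)
      (hg2int.add hindint) ?_
    exact (ae_restrict_iff' measurableSet_Ioi).mpr (Eventually.of_forall hptwise)
  have hindval : ∫ t in Ioi (0:ℝ), ind t = c := by
    rw [hind, integral_indicator measurableSet_Ioc]
    rw [Measure.restrict_restrict measurableSet_Ioc]
    have : Ioc (0:ℝ) 1 ∩ Ioi 0 = Ioc 0 1 := inter_eq_left.mpr Ioc_subset_Ioi_self
    rw [this]
    simp [Real.volume_Ioc]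
  calc ∫ x, f (x + s) ∂ν = ∫ t in Ioi (0:ℝ), (ν {a | t < f (a + s)}).toReal := l1
    _ ≤ ∫ t in Ioi (0:ℝ), (g2 t + ind t) := hmono
    _ = (∫ t in Ioi (0:ℝ), g2 t) + ∫ t in Ioi (0:ℝ), ind t := integral_add hg2int hindint
    _ = (∫ x, f x ∂ν) + TV ν s := by rw [hindval, ← l2]

end Aux

section Main

variable {U : Type*} [Nonempty U]

private lemma W_bddBelow (h : U → ℝ → ℝ) (h0 : ∀ u s, 0 ≤ h u s) (ν : Measure ℝ) :
    BddBelow (range fun u => ∫ x, h u x ∂ν) :=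
  ⟨0, by rintro _ ⟨w, rfl⟩; exact integral_nonneg (fun x => h0 w x)⟩

private lemma W_nonneg (h : U → ℝ → ℝ) (h0 : ∀ u s, 0 ≤ h u s) (ν : Measure ℝ) :
    0 ≤ ⨅ u, ∫ x, h u x ∂ν :=
  le_ciInf fun u => integral_nonneg (fun x => h0 u x)

private lemma W_le_one (h : U → ℝ → ℝ) (hmeas : ∀ u, Measurable (h u))
    (h0 : ∀ u s, 0 ≤ h u s) (h1 : ∀ u s, h u s ≤ 1) (ν : Measure ℝ)
    [IsProbabilityMeasure ν] : (⨅ u, ∫ x, h u x ∂ν) ≤ 1 := by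
  refine (ciInf_le (W_bddBelow h h0 ν) (Classical.arbitrary U)).trans ?_
  calc ∫ x, h (Classical.arbitrary U) x ∂ν ≤ ∫ _, (1:ℝ) ∂ν :=
        integral_mono (integrable_of_bdd (hmeas _) (h0 _) (h1 _) ν) (integrable_const 1)
          (fun x => h1 _ x)
    _ = 1 := by simp

private lemma ae_nonneg_of_supp {ν : Measure ℝ} (hν : ν (Iio 0) = 0) : ∀ᵐ x ∂ν, 0 ≤ x := by
  rw [ae_iff]
  simp only [not_le]; exact hν

private lemma W_le_shift (h : U → ℝ → ℝ) (hmeas : ∀ u, Measurable (h u))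
    (h0 : ∀ u s, 0 ≤ h u s)
    (hshift : ∀ (u : U) (T : ℝ), 0 ≤ T → ∃ u' : U, ∀ s ≥ (0:ℝ), h u' s = h u (s + T))
    (ν : Measure ℝ) (hν : ν (Iio 0) = 0) (u : U) {r : ℝ} (hr : 0 ≤ r) :
    (⨅ u', ∫ x, h u' x ∂ν) ≤ ∫ x, h u (x + r) ∂ν := by
  obtain ⟨u', hu'⟩ := hshift u r hr
  have heq : ∫ x, h u' x ∂ν = ∫ x, h u (x + r) ∂ν :=
    integral_congr_ae (by
      filter_upwards [ae_nonneg_of_supp hν] with x hx using hu' x hx)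
  exact heq ▸ ciInf_le (W_bddBelow h h0 ν) u'

/-- The inf over nonnegative shifts of `V` of the shifted measure is just `V ν`. -/
private lemma iInf_shift_eq (h : U → ℝ → ℝ) (hmeas : ∀ u, Measurable (h u))
    (h0 : ∀ u s, 0 ≤ h u s)
    (hshift : ∀ (u : U) (T : ℝ), 0 ≤ T → ∃ u' : U, ∀ s ≥ (0:ℝ), h u' s = h u (s + T))
    (V : Measure ℝ → ℝ) (hV : ∀ ν, V ν = ⨅ u, ∫ s, h u s ∂ν)
    (ν : Measure ℝ) (hν : ν (Iio 0) = 0) :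
    (⨅ t : Ici (0:ℝ), V (Measure.map (fun x => x + (t:ℝ)) ν)) = V ν := by
  refine le_antisymm ?_ (le_ciInf fun t => ?_)
  · have h0' : V (Measure.map (fun x => x + ((⟨0, Set.self_mem_Ici⟩ : Ici (0:ℝ)):ℝ)) ν) = V ν := by
      have : (fun x : ℝ => x + ((⟨0, Set.self_mem_Ici⟩ : Ici (0:ℝ)):ℝ)) = id := by
        funext x; simp
      rw [this, Measure.map_id]
    refine le_of_le_of_eq (ciInf_le ⟨0, ?_⟩ (⟨0, Set.self_mem_Ici⟩ : Ici (0:ℝ))) h0'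
    rintro _ ⟨t, rfl⟩
    show (0:ℝ) ≤ V (Measure.map (fun x => x + (t:ℝ)) ν)
    rw [hV]
    exact W_nonneg h h0 _
  · rw [hV, hV]
    refine le_ciInf fun u => ?_
    have hmap : ∫ x, h u x ∂(Measure.map (fun x => x + (t:ℝ)) ν)
        = ∫ x, h u (x + (t:ℝ)) ∂ν :=
      integral_map (measurable_add_const (t:ℝ)).aemeasurable
        (hmeas u).aestronglyMeasurable
    rw [hmap]
    exact W_le_shift h hmeas h0 hshift ν hν u t.2

/-- Translation comparison for interval averages. -/
private lemma inner_shift_le (g : ℝ → ℝ) (hg : Measurable g) (hg0 : ∀ x, 0 ≤ g x)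
    (hg1 : ∀ x, g x ≤ 1) {x T S : ℝ} (hx : 0 ≤ x) (hT : 0 ≤ T) (hS : 0 ≤ S) :
    ∫ t in Ioc (0:ℝ) S, g (x + T + t) ≤ (∫ t in Ioc (0:ℝ) S, g (T + t)) + x := by
  have hii : ∀ a b : ℝ, IntervalIntegrable g volume a b :=
    fun a b => intervalIntegrable_of_bdd hg hg0 hg1 a b
  have e0 : ∫ t in Ioc (0:ℝ) S, g (x + T + t) = ∫ y in (x+T)..(x+T+S), g y := by
    rw [← intervalIntegral.integral_of_le hS]
    rw [intervalIntegral.integral_comp_add_left g (x+T)]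
    norm_num
  have e0' : ∫ t in Ioc (0:ℝ) S, g (T + t) = ∫ y in T..(T+S), g y := by
    rw [← intervalIntegral.integral_of_le hS]
    rw [intervalIntegral.integral_comp_add_left g T]
    norm_num
  rw [e0, e0']
  have e1 := intervalIntegral.integral_add_adjacent_intervals (hii T (x+T)) (hii (x+T) (x+T+S))
  have e2 := intervalIntegral.integral_add_adjacent_intervals (hii T (T+S)) (hii (T+S) (x+T+S))
  have b1 : 0 ≤ ∫ y in T..(x+T), g y :=
    intervalIntegral.integral_nonneg (by linarith) (fun y _ => hg0 y)
  have b2 : ∫ y in (T+S)..(x+T+S), g y ≤ x := by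
    have hb : ∫ y in (T+S)..(x+T+S), g y ≤ ∫ _ in (T+S)..(x+T+S), (1:ℝ) :=
      intervalIntegral.integral_mono_on (by linarith) (hii _ _) intervalIntegrable_const
        (fun y _ => hg1 y)
    have : ∫ _ in (T+S)..(x+T+S), (1:ℝ) = x := by
      rw [intervalIntegral.integral_const]
      simp
    linarith
  linarith

/-- Fubini data for the product of `Ioc 0 S` (Lebesgue) with a probability measure. -/
private lemma fubini_piece (g : ℝ → ℝ) (hg : Measurable g) (hg0 : ∀ x, 0 ≤ g x)
    (hg1 : ∀ x, g x ≤ 1) (S : ℝ) (ν : Measure ℝ) [IsProbabilityMeasure ν] (c : ℝ) :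
    (∫ t in Ioc (0:ℝ) S, (∫ x, g (x + c + t) ∂ν)) = ∫ x, (∫ t in Ioc (0:ℝ) S, g (x + c + t)) ∂ν
    ∧ Integrable (fun t => ∫ x, g (x + c + t) ∂ν) (volume.restrict (Ioc (0:ℝ) S))
    ∧ Integrable (fun x => ∫ t in Ioc (0:ℝ) S, g (x + c + t)) ν := by
  haveI := isFiniteRestrictIoc (0:ℝ) S
  have hFm : Measurable (Function.uncurry fun t x : ℝ => g (x + c + t)) := by
    show Measurable fun p : ℝ × ℝ => g (p.2 + c + p.1)
    exact hg.comp ((measurable_snd.add_const c).add measurable_fst)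
  have hFi : Integrable (Function.uncurry fun t x : ℝ => g (x + c + t))
      ((volume.restrict (Ioc (0:ℝ) S)).prod ν) :=
    Integrable.mono' (integrable_const 1) hFm.aestronglyMeasurable
      (Eventually.of_forall fun p => by
        show ‖g (p.2 + c + p.1)‖ ≤ 1
        rw [Real.norm_eq_abs, abs_of_nonneg (hg0 _)]; exact hg1 _)
  refine ⟨integral_integral_swap hFi, hFi.integral_prod_left, ?_⟩
  exact hFi.integral_prod_right

end Main

private lemma key_ineq {U : Type*} [Nonempty U]
    (h : U → ℝ → ℝ) (hmeas : ∀ u, Measurable (h u))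
    (h0 : ∀ u s, 0 ≤ h u s) (h1 : ∀ u s, h u s ≤ 1)
    (hshift : ∀ (u : U) (T : ℝ), 0 ≤ T → ∃ u' : U, ∀ s ≥ (0:ℝ), h u' s = h u (s + T))
    (θ : ℕ → Measure ℝ) (hprob : ∀ k, IsProbabilityMeasure (θ k))
    (hsupp : ∀ k, θ k (Iio 0) = 0) (hltc : LTC θ)
    (μ : Measure ℝ) (hμp : IsProbabilityMeasure μ) (hμ0 : μ (Iio 0) = 0) :
    (⨅ u, ∫ x, h u x ∂μ) ≤ ⨆ k, ⨅ u, ∫ x, h u x ∂(θ k) := by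
  haveI := hμp
  have hsupW : BddAbove (range fun k => ⨅ u, ∫ x, h u x ∂(θ k)) := by
    refine ⟨1, ?_⟩
    rintro _ ⟨k, rfl⟩
    haveI := hprob k
    exact W_le_one h hmeas h0 h1 (θ k)
  -- it suffices to prove the bound up to each ε > 0
  by_contra hcon
  push_neg at hcon
  set ε : ℝ := ((⨅ u, ∫ x, h u x ∂μ) - ⨆ k, ⨅ u, ∫ x, h u x ∂(θ k)) / 5 with hεdef
  have hε : 0 < ε := by
    have := hcon
    simp only [hεdef]
    linarith
  have hmain : (⨅ u, ∫ x, h u x ∂μ) ≤ (⨆ k, ⨅ u, ∫ x, h u x ∂(θ k)) + 4 * ε := by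
    -- choose M with small tail
    obtain ⟨M₀, hM₀⟩ : ∃ n : ℕ, μ (Ioi (n:ℝ)) < ENNReal.ofReal ε := by
      have hinter : ⋂ n : ℕ, Ioi (n:ℝ) = ∅ := by
        ext x
        simp only [mem_iInter, mem_Ioi, mem_empty_iff_false, iff_false, not_forall, not_lt]
        obtain ⟨n, hn⟩ := exists_nat_gt x
        exact ⟨n, hn.le⟩
      have htend : Tendsto (fun n : ℕ => μ (Ioi (n:ℝ))) atTop (nhds 0) := by
        have := tendsto_measure_iInter_atTop (μ := μ)
          (s := fun n : ℕ => Ioi (n:ℝ))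
          (fun n => (measurableSet_Ioi).nullMeasurableSet)
          (fun m n hmn => Ioi_subset_Ioi (by exact_mod_cast hmn))
          ⟨0, measure_ne_top μ _⟩
        rw [hinter] at this
        simpa [Function.comp_def] using this
      exact (htend.eventually_lt_const (by simpa using ENNReal.ofReal_pos.mpr hε)).exists
    set M : ℝ := (M₀ : ℝ) with hMdef
    have hM0 : 0 ≤ M := Nat.cast_nonneg M₀
    have hμtail : (μ (Ioi M)).toReal ≤ ε := (ENNReal.toReal_lt_of_lt_ofReal hM₀).le
    -- choose S
    set S : ℝ := max (M / ε) 1 with hSdef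
    have hS1 : 1 ≤ S := le_max_right _ _
    have hS0 : 0 < S := lt_of_lt_of_le one_pos hS1
    have hMS : M ≤ ε * S := by
      have h1' : M / ε ≤ S := le_max_left _ _
      calc M = ε * (M / ε) := by field_simp
        _ ≤ ε * S := by nlinarith
    -- choose k
    obtain ⟨k, hk⟩ : ∃ k, (⨆ s : Icc (0:ℝ) S, TV (θ k) s) < ε :=
      ((hltc S hS0).eventually_lt_const hε).exists
    haveI := hprob k
    have hTV : ∀ t ∈ Icc (0:ℝ) S, TV (θ k) t ≤ ε := by
      intro t ht
      refine le_of_lt (lt_of_le_of_lt ?_ hk)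
      exact le_ciSup (f := fun s : Icc (0:ℝ) S => TV (θ k) (s:ℝ))
        ⟨1, by rintro _ ⟨s, rfl⟩; exact TV_le_one (θ k) _⟩ ⟨t, ht⟩
    -- choose u near-optimal for θ k
    obtain ⟨u, hu⟩ : ∃ u, ∫ x, h u x ∂(θ k) < (⨅ u', ∫ x, h u' x ∂(θ k)) + ε :=
      exists_lt_of_ciInf_lt (lt_add_of_pos_right _ hε)
    -- the averaged quantity
    set A : ℝ := ⨅ T : Ici (0:ℝ), (1/S) * ∫ t in Ioc (0:ℝ) S, h u ((T:ℝ) + 0 + t) with hAdef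
    have hAbdd : BddBelow (range fun T : Ici (0:ℝ) =>
        (1/S) * ∫ t in Ioc (0:ℝ) S, h u ((T:ℝ) + 0 + t)) := by
      refine ⟨0, ?_⟩
      rintro _ ⟨T, rfl⟩
      exact mul_nonneg (by positivity)
        (setIntegral_nonneg measurableSet_Ioc fun t _ => h0 u _)
    have hconstIoc : ∀ c : ℝ, IntegrableOn (fun _ : ℝ => c) (Ioc (0:ℝ) S) volume := by
      intro c
      haveI := isFiniteRestrictIoc (0:ℝ) S
      exact integrable_const c
    have claim1 : (⨅ u', ∫ x, h u' x ∂μ) ≤ A + ε + ε := by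
      have hsub : (⨅ u', ∫ x, h u' x ∂μ) - (ε + ε) ≤ A := by
        refine le_ciInf fun T => ?_
        obtain ⟨hswap, hmarg_t, hmarg_x⟩ :=
          fubini_piece (h u) (hmeas u) (h0 u) (h1 u) S μ (T:ℝ)
        set W : ℝ := ⨅ u', ∫ x, h u' x ∂μ with hWdef
        set B : ℝ := ∫ t in Ioc (0:ℝ) S, h u ((T:ℝ) + t) with hBdef
        have hB0 : 0 ≤ B := setIntegral_nonneg measurableSet_Ioc fun t _ => h0 u _
        have step1 : S * W ≤ ∫ t in Ioc (0:ℝ) S, (∫ x, h u (x + (T:ℝ) + t) ∂μ) := by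
          have hc : ∫ _ in Ioc (0:ℝ) S, W = S * W := by
            rw [setIntegral_const]
            simp [Real.volume_Ioc, ENNReal.toReal_ofReal hS0.le, smul_eq_mul, hS0.le]
          rw [← hc]
          refine setIntegral_mono_on (hconstIoc W) hmarg_t measurableSet_Ioc ?_
          intro t ht
          have := W_le_shift h hmeas h0 hshift μ hμ0 u
            (add_nonneg T.2 ht.1.le)
          simpa [add_assoc] using this
        have step2 : ∫ t in Ioc (0:ℝ) S, (∫ x, h u (x + (T:ℝ) + t) ∂μ)
            = ∫ x, (∫ t in Ioc (0:ℝ) S, h u (x + (T:ℝ) + t)) ∂μ := hswap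
        set φ : ℝ → ℝ := fun x => (B + M) + S * (Ioi M).indicator (fun _ => (1:ℝ)) x
          with hφdef
        have hφint : Integrable φ μ :=
          (integrable_const (B + M)).add
            (((integrable_const (1:ℝ)).indicator measurableSet_Ioi).const_mul S)
        have hφval : ∫ x, φ x ∂μ = (B + M) + S * (μ (Ioi M)).toReal := by
          rw [hφdef, integral_add (integrable_const _)
            (((integrable_const (1:ℝ)).indicator measurableSet_Ioi).const_mul S),
            integral_const, integral_const_mul, integral_indicator measurableSet_Ioi,
            setIntegral_const]
          simp [Measure.real]
        have step3 : ∫ x, (∫ t in Ioc (0:ℝ) S, h u (x + (T:ℝ) + t)) ∂μ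
            ≤ ∫ x, φ x ∂μ := by
          refine integral_mono_ae hmarg_x hφint ?_
          filter_upwards [ae_nonneg_of_supp hμ0] with x hx
          by_cases hxM : x ≤ M
          · have hle := inner_shift_le (h u) (hmeas u) (h0 u) (h1 u) hx T.2 hS0.le
            have hind : 0 ≤ S * (Ioi M).indicator (fun _ => (1:ℝ)) x :=
              mul_nonneg hS0.le (indicator_nonneg (fun _ _ => zero_le_one) x)
            simp only [hφdef]
            rw [← hBdef] at hle
            linarith
          · have hle : ∫ t in Ioc (0:ℝ) S, h u (x + (T:ℝ) + t) ≤ S := by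
              have hmono : ∫ t in Ioc (0:ℝ) S, h u (x + (T:ℝ) + t)
                  ≤ ∫ _ in Ioc (0:ℝ) S, (1:ℝ) := by
                refine setIntegral_mono_on ?_ (hconstIoc 1) measurableSet_Ioc
                  (fun t _ => h1 u _)
                exact integrableOn_Ioc_of_bdd
                  ((hmeas u).comp (measurable_id.const_add (x + (T:ℝ))))
                  (fun t => h0 u _) (fun t => h1 u _) 0 S
              have hc : ∫ _ in Ioc (0:ℝ) S, (1:ℝ) = S := by
                rw [setIntegral_const]
                simp [Real.volume_Ioc, ENNReal.toReal_ofReal hS0.le, hS0.le]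
              linarith
            have hind : (Ioi M).indicator (fun _ => (1:ℝ)) x = 1 :=
              indicator_of_mem (by simpa [mem_Ioi] using lt_of_not_ge hxM) _
            simp only [hφdef, hind]
            linarith
        have htail : S * (μ (Ioi M)).toReal ≤ S * ε :=
          mul_le_mul_of_nonneg_left hμtail hS0.le
        have hSW : S * W ≤ B + M + S * ε := by
          rw [step2] at step1
          have := step1.trans (step3.trans_eq hφval)
          linarith
        have hfin : W - (ε + ε) ≤ B / S := by
          rw [le_div_iff₀ hS0]
          nlinarith
        have hBrw : (1/S) * ∫ t in Ioc (0:ℝ) S, h u ((T:ℝ) + 0 + t) = B / S := by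
          rw [hBdef, one_div_mul_eq_div]
          norm_num
        rw [hBrw]
        exact hfin
      linarith
    have claim2 : A ≤ (⨅ u', ∫ x, h u' x ∂(θ k)) + ε + ε := by
      obtain ⟨hswap, hmarg_t, hmarg_x⟩ :=
        fubini_piece (h u) (hmeas u) (h0 u) (h1 u) S (θ k) 0
      have hSA : S * A ≤ ∫ x, (∫ t in Ioc (0:ℝ) S, h u (x + 0 + t)) ∂(θ k) := by
        have hconst : ∫ _, (S*A : ℝ) ∂(θ k) = S * A := by simp
        rw [← hconst]
        refine integral_mono_ae (integrable_const _) hmarg_x ?_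
        filter_upwards [ae_nonneg_of_supp (hsupp k)] with x hx
        have hA : A ≤ (1/S) * ∫ t in Ioc (0:ℝ) S, h u (x + 0 + t) :=
          ciInf_le hAbdd (⟨x, hx⟩ : Ici (0:ℝ))
        have := mul_le_mul_of_nonneg_left hA hS0.le
        calc S * A ≤ S * ((1/S) * ∫ t in Ioc (0:ℝ) S, h u (x + 0 + t)) := this
          _ = ∫ t in Ioc (0:ℝ) S, h u (x + 0 + t) := by field_simp
      have hswap' : ∫ x, (∫ t in Ioc (0:ℝ) S, h u (x + 0 + t)) ∂(θ k)
          = ∫ t in Ioc (0:ℝ) S, (∫ x, h u (x + 0 + t) ∂(θ k)) := hswap.symm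
      have hper : ∫ t in Ioc (0:ℝ) S, (∫ x, h u (x + 0 + t) ∂(θ k))
          ≤ ∫ _ in Ioc (0:ℝ) S, ((∫ x, h u x ∂(θ k)) + ε) := by
        refine setIntegral_mono_on hmarg_t (hconstIoc _) measurableSet_Ioc ?_
        intro t ht
        have h2 : ∫ x, h u (x + 0 + t) ∂(θ k) = ∫ x, h u (x + t) ∂(θ k) := by
          simp only [add_zero]
        rw [h2]
        have hsi := shift_integral_le (θ k) (hsupp k) (hmeas u) (h0 u) (h1 u) ht.1.le
        have hTv := hTV t ⟨ht.1.le, ht.2⟩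
        linarith
      have hconstInt : ∫ _ in Ioc (0:ℝ) S, ((∫ x, h u x ∂(θ k)) + ε)
          = S * ((∫ x, h u x ∂(θ k)) + ε) := by
        rw [setIntegral_const]
        simp [Real.volume_Ioc, ENNReal.toReal_ofReal hS0.le, smul_eq_mul, hS0.le]
      have hcomb : S * A ≤ S * ((∫ x, h u x ∂(θ k)) + ε) := by
        rw [hswap'] at hSA
        linarith
      have hA2 : A ≤ (∫ x, h u x ∂(θ k)) + ε :=
        le_of_mul_le_mul_left hcomb hS0
      linarith
    have hWk : (⨅ u', ∫ x, h u' x ∂(θ k)) ≤ ⨆ k, ⨅ u, ∫ x, h u x ∂(θ k) :=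
      le_ciSup hsupW k
    linarith
  simp only [hεdef] at hmain
  linarith

theorem limit_value_characterization {U : Type*} [Nonempty U]
    (h : U → ℝ → ℝ) (hmeas : ∀ u, Measurable (h u))
    (h0 : ∀ u s, 0 ≤ h u s) (h1 : ∀ u s, h u s ≤ 1)
    (hshift : ∀ (u : U) (T : ℝ), 0 ≤ T → ∃ u' : U, ∀ s ≥ (0:ℝ), h u' s = h u (s + T))
    (V : Measure ℝ → ℝ) (hV : ∀ ν, V ν = ⨅ u, ∫ s, h u s ∂ν)
    (θ : ℕ → Measure ℝ) (hprob : ∀ k, IsProbabilityMeasure (θ k))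
    (hsupp : ∀ k, θ k (Iio 0) = 0) (hltc : LTC θ) :
    (⨆ μ : {μ : Measure ℝ // IsProbabilityMeasure μ ∧ μ (Iio 0) = 0},
        ⨅ t : Ici (0:ℝ), V (Measure.map (fun x => x + (t:ℝ)) μ.1)) =
      ⨆ k : ℕ, ⨅ t : Ici (0:ℝ), V (Measure.map (fun x => x + (t:ℝ)) (θ k)) := by
  haveI : Nonempty {μ : Measure ℝ // IsProbabilityMeasure μ ∧ μ (Iio 0) = 0} :=
    ⟨⟨θ 0, hprob 0, hsupp 0⟩⟩
  have hL : ∀ μ : {μ : Measure ℝ // IsProbabilityMeasure μ ∧ μ (Iio 0) = 0},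
      (⨅ t : Ici (0:ℝ), V (Measure.map (fun x => x + (t:ℝ)) μ.1)) = V μ.1 :=
    fun μ => iInf_shift_eq h hmeas h0 hshift V hV μ.1 μ.2.2
  have hR : ∀ k : ℕ,
      (⨅ t : Ici (0:ℝ), V (Measure.map (fun x => x + (t:ℝ)) (θ k))) = V (θ k) :=
    fun k => iInf_shift_eq h hmeas h0 hshift V hV (θ k) (hsupp k)
  rw [iSup_congr hL, iSup_congr hR]
  refine le_antisymm ?_ ?_
  · refine ciSup_le fun μ => ?_
    rw [hV]
    calc (⨅ u, ∫ s, h u s ∂μ.1) ≤ ⨆ k, ⨅ u, ∫ x, h u x ∂(θ k) :=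
          key_ineq h hmeas h0 h1 hshift θ hprob hsupp hltc μ.1 μ.2.1 μ.2.2
      _ = ⨆ k, V (θ k) := by
          refine iSup_congr fun k => ?_
          rw [hV]
  · refine ciSup_le fun k => ?_
    refine le_ciSup (f := fun μ : {μ : Measure ℝ // IsProbabilityMeasure μ ∧ μ (Iio 0) = 0} =>
      V μ.1) ?_ ⟨θ k, hprob k, hsupp k⟩
    refine ⟨1, ?_⟩
    rintro _ ⟨μ, rfl⟩
    haveI := μ.2.1
    show V μ.1 ≤ 1
    rw [hV]
    exact W_le_one h hmeas h0 h1 μ.1
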